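/- Let A be a commutative ring with 1 in which the sum of any two radical ideals is a radical ideal, and suppose the poset of prime ideals of A under inclusion is a root system (every up-set of a prime is a chain). If p and q are prime ideals of A with 1 ∉ p + q, then p + q is a prime ideal of A. -/
import Mathlib


/-- In a commutative ring in which the sum of any two radical ideals is
radical, and whose prime spectrum is a root system under inclusion, the sum of two
prime ideals not containing 1 is a prime ideal. -/
theorem sum_of_primes_isPrime {A : Type*} [CommRing A]
    (hrad : ∀ I J : Ideal A, I.IsRadical → J.IsRadical → (I + J).IsRadical)
    (hroot : ∀ p q r : Ideal A, p.IsPrime → q.IsPrime → r.IsPrime →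
      p ≤ q → p ≤ r → q ≤ r ∨ r ≤ q)
    (p q : Ideal A) (hp : p.IsPrime) (hq : q.IsPrime) (h1 : (1 : A) ∉ p + q) :
    (p + q).IsPrime := by
  have hne : p + q ≠ ⊤ := fun h => h1 (h ▸ Submodule.mem_top)
  -- the set of primes above p + q
  set S : Set (Ideal A) := {r | p + q ≤ r ∧ r.IsPrime} with hS
  obtain ⟨M, hM, hMle⟩ := Ideal.exists_le_maximal _ hne
  have hMS : M ∈ S := ⟨hMle, hM.isPrime⟩
  -- S is a chain
  have hchain : ∀ r₁ ∈ S, ∀ r₂ ∈ S, r₁ ≤ r₂ ∨ r₂ ≤ r₁ := by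
    intro r₁ hr₁ r₂ hr₂
    exact hroot p r₁ r₂ hp hr₁.2 hr₂.2 (le_trans le_sup_left hr₁.1)
      (le_trans le_sup_left hr₂.1)
  -- p + q equals its radical equals sInf S
  have hradical : (p + q).IsRadical := hrad p q hp.isRadical hq.isRadical
  have heq : p + q = sInf S := by
    rw [← hradical.radical, Ideal.radical_eq_sInf]
  rw [heq]
  constructor
  · intro htop
    exact hM.ne_top (top_le_iff.mp (htop ▸ sInf_le hMS))
  · intro a b hab
    by_contra hcon
    push_neg at hcon
    obtain ⟨ha, hb⟩ := hcon
    simp only [Submodule.mem_sInf] at ha hb hab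
    push_neg at ha hb
    obtain ⟨r₁, hr₁S, har₁⟩ := ha
    obtain ⟨r₂, hr₂S, hbr₂⟩ := hb
    rcases hchain r₁ hr₁S r₂ hr₂S with h | h
    · rcases hr₁S.2.mem_or_mem (hab r₁ hr₁S) with h' | h'
      · exact har₁ h'
      · exact hbr₂ (h h')
    · rcases hr₂S.2.mem_or_mem (hab r₂ hr₂S) with h' | h'
      · exact har₁ (h h')
      · exact hbr₂ h'
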